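/- arXiv:2211.04599 — 2 statements merged into one kernel-verified Lean document; each statement's English description precedes it below -/
import Mathlib

section
/- For e(ϱ,θ) = (3/2)(θ^{5/2}/ϱ)P(ϱθ^{−3/2}) + aθ⁴/ϱ with P' > 0 and (5/3)P(Z) − Z P'(Z) > 0 for all Z > 0, the specific heat at constant volume ∂e/∂θ (ϱ,θ) is strictly positive for all ϱ>0, θ>0. -/
/-- For `e(ϱ,θ) = (3/2)(θ^(5/2)/ϱ) P(ϱθ^(-3/2)) + aθ⁴/ϱ` with `a > 0`, `P' > 0`
and `(5/3)P(Z) - Z P'(Z) > 0` for all `Z > 0`, the specific heat at constant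
volume `∂e/∂θ (ϱ,θ)` is strictly positive for all `ϱ > 0`, `θ > 0`. -/
theorem stmt6 (a : ℝ) (ha : 0 < a) (P P' : ℝ → ℝ)
    (hderiv : ∀ Z > (0:ℝ), HasDerivAt P (P' Z) Z)
    (hP'pos : ∀ Z > (0:ℝ), 0 < P' Z)
    (hpos : ∀ Z > (0:ℝ), 0 < 5/3 * P Z - Z * P' Z)
    (ϱ θ : ℝ) (hϱ : 0 < ϱ) (hθ : 0 < θ) :
    ∃ d : ℝ,
      HasDerivAt
        (fun t : ℝ => 3/2 * (t ^ ((5:ℝ)/2) / ϱ) * P (ϱ / t ^ ((3:ℝ)/2)) + a * t^4 / ϱ)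
        d θ
      ∧ 0 < d := by
  set Z : ℝ := ϱ / θ ^ ((3:ℝ)/2) with hZdef
  have hθ32 : (0:ℝ) < θ ^ ((3:ℝ)/2) := Real.rpow_pos_of_pos hθ _
  have hZ : 0 < Z := div_pos hϱ hθ32
  -- derivative of t ↦ ϱ * t^(-(3/2))
  have hg0 : HasDerivAt (fun t : ℝ => t ^ (-((3:ℝ)/2)))
      (-((3:ℝ)/2) * θ ^ (-((3:ℝ)/2) - 1)) θ :=
    Real.hasDerivAt_rpow_const (Or.inl hθ.ne')
  have hg : HasDerivAt (fun t : ℝ => ϱ * t ^ (-((3:ℝ)/2)))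
      (ϱ * (-((3:ℝ)/2) * θ ^ (-((3:ℝ)/2) - 1))) θ := hg0.const_mul ϱ
  -- same as t ↦ ϱ / t^(3/2) near θ
  have hgeq : (fun t : ℝ => ϱ / t ^ ((3:ℝ)/2)) =ᶠ[nhds θ] (fun t : ℝ => ϱ * t ^ (-((3:ℝ)/2))) := by
    filter_upwards [eventually_gt_nhds hθ] with t ht
    rw [Real.rpow_neg ht.le, div_eq_mul_inv]
  have hg' : HasDerivAt (fun t : ℝ => ϱ / t ^ ((3:ℝ)/2))
      (ϱ * (-((3:ℝ)/2) * θ ^ (-((3:ℝ)/2) - 1))) θ := hg.congr_of_eventuallyEq hgeq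
  -- chain rule for P ∘ g
  have hZval : (ϱ / θ ^ ((3:ℝ)/2)) = Z := rfl
  have hPc : HasDerivAt (fun t : ℝ => P (ϱ / t ^ ((3:ℝ)/2)))
      (P' Z * (ϱ * (-((3:ℝ)/2) * θ ^ (-((3:ℝ)/2) - 1)))) θ := by
    have := (hderiv Z hZ).comp θ hg'
    exact this
  -- derivative of the prefactor
  have h1 : HasDerivAt (fun t : ℝ => 3/2 * (t ^ ((5:ℝ)/2) / ϱ))
      (3/2 * (((5:ℝ)/2) * θ ^ ((5:ℝ)/2 - 1) / ϱ)) θ :=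
    ((Real.hasDerivAt_rpow_const (Or.inl hθ.ne')).div_const ϱ).const_mul (3/2)
  have h2 : HasDerivAt (fun t : ℝ => a * t^4 / ϱ) (a * (4 * θ^3) / ϱ) θ := by
    have := ((hasDerivAt_pow 4 θ).const_mul a).div_const ϱ
    simpa using this
  have hmain := (h1.mul hPc).add h2
  refine ⟨_, hmain, ?_⟩
  -- positivity
  have e1 : (5:ℝ)/2 - 1 = 3/2 := by norm_num
  have e2 : -((3:ℝ)/2) - 1 = -((5:ℝ)/2) := by norm_num
  rw [e1, e2]
  have hθ52 : (0:ℝ) < θ ^ ((5:ℝ)/2) := Real.rpow_pos_of_pos hθ _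
  have hBC : θ ^ ((5:ℝ)/2) * θ ^ (-((5:ℝ)/2)) = 1 := by
    rw [← Real.rpow_add hθ]; norm_num
  have hZA : Z * θ ^ ((3:ℝ)/2) = ϱ := div_mul_cancel₀ ϱ hθ32.ne'
  have key := hpos Z hZ
  have hkey2 : 0 < 9/4 * (θ ^ ((3:ℝ)/2) / ϱ) * (5/3 * P Z - Z * P' Z) :=
    mul_pos (by positivity) key
  have haθ : 0 < a * (4 * θ^3) / ϱ := by positivity
  have hC : θ ^ (-((5:ℝ)/2)) = (θ ^ ((5:ℝ)/2))⁻¹ := Real.rpow_neg hθ.le _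
  have hBs : θ ^ ((5:ℝ)/2) = θ * θ ^ ((3:ℝ)/2) := by
    have h : (5:ℝ)/2 = 1 + 3/2 := by norm_num
    rw [h, Real.rpow_add hθ, Real.rpow_one]
  -- d = 15/4 (θ^{3/2}/ϱ) P Z - 9/4 P' Z + 4aθ³/ϱ
  have hd : 3/2 * (5/2 * θ ^ ((3:ℝ)/2) / ϱ) * P Z
      + 3/2 * (θ ^ ((5:ℝ)/2) / ϱ) * (P' Z * (ϱ * (-(3/2) * θ ^ (-((5:ℝ)/2)))))
      + a * (4 * θ^3) / ϱ
      = 9/4 * (θ ^ ((3:ℝ)/2) / ϱ) * (5/3 * P Z - Z * P' Z) + a * (4 * θ^3) / ϱ := by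
    rw [hC, hBs, ← hZA]
    have hZne : Z ≠ 0 := hZ.ne'
    field_simp
    ring
  calc (0:ℝ) < 9/4 * (θ ^ ((3:ℝ)/2) / ϱ) * (5/3 * P Z - Z * P' Z) + a * (4 * θ^3) / ϱ :=
        add_pos hkey2 haθ
    _ = _ := by rw [← hd]
end

section
/- Cone condition stability: let {O_ε} be a family of compact subsets of a fixed ball B_r(0) ⊂ ℝ³ such that each complement ℝ³ \ O_ε satisfies the uniform α-cone condition with α > 0 independent of ε. Then there is a subsequence ε_n → 0 and a compact set O ⊂ B̄_r(0) such that ℝ³ \ O satisfies the uniform α-cone condition and |(ℝ³ \ O_{ε_n}) Δ (ℝ³ \ O)| → 0 as n → ∞, where Δ denotes symmetric difference restricted to B_r(0). -/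
open Set Filter MeasureTheory Metric TopologicalSpace
open scoped ENNReal

/-- The open cone with vertex `x`, aperture `2γ`, height `α` and direction `ξ`. -/
def cone3 (x : EuclideanSpace ℝ (Fin 3)) (γ α : ℝ) (ξ : EuclideanSpace ℝ (Fin 3)) :
    Set (EuclideanSpace ℝ (Fin 3)) :=
  {y | 0 < ‖y - x‖ ∧ ‖y - x‖ ≤ α ∧ Real.cos γ * ‖y - x‖ < (inner ℝ (y - x) ξ : ℝ)}

/-- `A ⊆ ℝ³` satisfies the uniform `α`-cone condition (with aperture `2γ`). -/
def UniformConeCond (α γ : ℝ) (A : Set (EuclideanSpace ℝ (Fin 3))) : Prop :=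
  ∀ x₀ ∈ frontier A, ∃ ξ : EuclideanSpace ℝ (Fin 3), ‖ξ‖ = 1 ∧
    ∀ x ∈ A, ‖x - x₀‖ < α → cone3 x γ α ξ ⊆ A

set_option maxHeartbeats 2000000
set_option linter.unusedVariables false
set_option linter.unusedSectionVars false

namespace Stmt14Aux

noncomputable section

abbrev E3 := EuclideanSpace ℝ (Fin 3)

lemma cos_bounds {γ : ℝ} (hγ : γ ∈ Set.Ioo 0 (Real.pi/2)) :
    0 < Real.cos γ ∧ Real.cos γ < 1 := by
  constructor
  · exact Real.cos_pos_of_mem_Ioo ⟨by linarith [hγ.1, Real.pi_pos], hγ.2⟩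
  · have := Real.cos_lt_cos_of_nonneg_of_le_pi (le_refl 0) (by linarith [hγ.2, Real.pi_pos]) hγ.1
    simpa using this

/-- A closed ball sits inside the cone. -/
lemma closedBall_subset_cone3 {γ α : ℝ} (hγ : γ ∈ Set.Ioo 0 (Real.pi/2)) (hα : 0 < α)
    {ξ : E3} (hξ : ‖ξ‖ = 1) (x : E3) {t : ℝ} (ht : 0 < t) (htα : t ≤ α/2) :
    closedBall (x + t • ξ) (t * (1 - Real.cos γ)/4) ⊆ cone3 x γ α ξ := by
  have hc0 : 0 < Real.cos γ := Real.cos_pos_of_mem_Ioo ⟨by linarith [hγ.1, Real.pi_pos], hγ.2⟩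
  have hc1 : Real.cos γ < 1 := by
    have := Real.cos_lt_cos_of_nonneg_of_le_pi (le_refl 0) (by linarith [hγ.2, Real.pi_pos]) hγ.1
    simpa using this
  set c := Real.cos γ
  set σ := t * (1 - c)/4 with hσ
  have hσ0 : 0 < σ := by
    have : 0 < 1 - c := by linarith
    positivity
  have hσt : σ < t/2 := by nlinarith
  intro z hz
  simp only [mem_closedBall, dist_eq_norm] at hz
  -- write z - x = (z - (x + t ξ)) + t ξ
  have hdec : z - x = (z - (x + t • ξ)) + t • ξ := by abel
  set u := z - (x + t • ξ) with hu
  have hnu : ‖u‖ ≤ σ := hz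
  have htξ : ‖t • ξ‖ = t := by rw [norm_smul, hξ, Real.norm_eq_abs, abs_of_pos ht, mul_one]
  have hub : ‖z - x‖ ≤ t + σ := by
    rw [hdec]
    calc ‖u + t • ξ‖ ≤ ‖u‖ + ‖t • ξ‖ := norm_add_le _ _
    _ ≤ σ + t := by rw [htξ]; linarith
    _ = t + σ := by ring
  have hlb : t - σ ≤ ‖z - x‖ := by
    have h := norm_sub_le (u + t • ξ) u
    have he : (u + t • ξ) - u = t • ξ := by abel
    rw [he, htξ] at h
    rw [hdec]; linarith
  have hpos : 0 < ‖z - x‖ := by linarith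
  have hle : ‖z - x‖ ≤ α := by linarith
  refine ⟨hpos, hle, ?_⟩
  have hinner : (inner ℝ (z - x) ξ : ℝ) = (inner ℝ u ξ : ℝ) + t := by
    rw [hdec, inner_add_left, inner_smul_left]
    have : (inner ℝ ξ ξ : ℝ) = 1 := by
      have := real_inner_self_eq_norm_sq ξ; rw [hξ] at this; simpa using this
    simp [this, hξ]
  have habs : |(inner ℝ u ξ : ℝ)| ≤ σ := by
    calc |(inner ℝ u ξ : ℝ)| ≤ ‖u‖ * ‖ξ‖ := abs_real_inner_le_norm _ _
    _ ≤ σ := by rw [hξ, mul_one]; exact hnu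
  have h1 : c * ‖z - x‖ ≤ c * (t + σ) := by
    apply mul_le_mul_of_nonneg_left hub hc0.le
  have h2 : t - σ ≤ (inner ℝ (z - x) ξ : ℝ) := by
    rw [hinner]
    have := abs_le.mp habs
    linarith [this.1]
  -- c (t+σ) < t - σ  ⟺  σ(1+c) < t(1-c); σ ≤ t(1-c)/4 and 1+c < 2 < 4
  have : c * (t + σ) < t - σ := by nlinarith
  linarith

/-- Robust cone membership: if `y ∈ cone3 x γ α ξ`, then for slightly perturbed
vertex `x'` and direction `ξ'`, after pushing the vertex a little in direction `ξ'`,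
a whole neighbourhood of `y` is in the cone, and the pushed vertex is in the cone of `x'`. -/
lemma cone3_robust {γ α : ℝ} (hγ : γ ∈ Set.Ioo 0 (Real.pi/2)) (hα : 0 < α) {x ξ y : E3}
    (hξ : ‖ξ‖ = 1) (hy : y ∈ cone3 x γ α ξ) (θ : ℝ) (hθ : 0 < θ) :
    ∃ ε η : ℝ, 0 < ε ∧ 0 < η ∧ ε ≤ θ ∧ η ≤ θ ∧
      ∀ x' ξ' : E3, ‖ξ'‖ = 1 → ‖x' - x‖ ≤ η → ‖ξ' - ξ‖ ≤ η →
      (x' + ε • ξ' ∈ cone3 x' γ α ξ') ∧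
      ∀ z : E3, ‖z - y‖ ≤ η → z ∈ cone3 (x' + ε • ξ') γ α ξ' := by
  obtain ⟨hc0, hc1⟩ := cos_bounds hγ
  set c := Real.cos γ
  obtain ⟨hd0, hdα, hinn⟩ := hy
  set v := y - x with hv
  set d := ‖v‖ with hd
  set m := (inner ℝ v ξ : ℝ) - c * d with hm
  have hm0 : 0 < m := by simp only [hm]; linarith
  set ε := min (min (c*d/2) (m/8)) θ with hε
  set η := min (min (ε*c/8) (m/(8*(d+2)))) (min (d/8) θ) with hη
  have hε0 : 0 < ε := by
    apply lt_min (lt_min _ _) hθ <;> positivity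
  have hη0 : 0 < η := by
    apply lt_min (lt_min _ _) (lt_min _ _) <;> positivity
  have hεcd : ε ≤ c*d/2 := le_trans (min_le_left _ _) (min_le_left _ _)
  have hεm : ε ≤ m/8 := le_trans (min_le_left _ _) (min_le_right _ _)
  have hεθ : ε ≤ θ := min_le_right _ _
  have hηec : η ≤ ε*c/8 := le_trans (min_le_left _ _) (min_le_left _ _)
  have hηm : η ≤ m/(8*(d+2)) := le_trans (min_le_left _ _) (min_le_right _ _)
  have hηd : η ≤ d/8 := le_trans (min_le_right _ _) (min_le_left _ _)
  have hηθ : η ≤ θ := le_trans (min_le_right _ _) (min_le_right _ _)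
  have hεd : ε < d := by nlinarith
  have hεα : ε ≤ α := le_trans (by nlinarith) hdα
  refine ⟨ε, η, hε0, hη0, hεθ, hηθ, ?_⟩
  intro x' ξ' hξ' hx' hξξ
  have hinsq : (inner ℝ ξ' ξ' : ℝ) = 1 := by
    have := real_inner_self_eq_norm_sq ξ'; rw [hξ'] at this; simpa using this
  constructor
  · refine ⟨?_, ?_, ?_⟩
    · have : x' + ε • ξ' - x' = ε • ξ' := by abel
      rw [this, norm_smul, hξ', Real.norm_eq_abs, abs_of_pos hε0, mul_one]; exact hε0
    · have : x' + ε • ξ' - x' = ε • ξ' := by abel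
      rw [this, norm_smul, hξ', Real.norm_eq_abs, abs_of_pos hε0, mul_one]; exact hεα
    · have h1 : x' + ε • ξ' - x' = ε • ξ' := by abel
      rw [h1, norm_smul, hξ', Real.norm_eq_abs, abs_of_pos hε0, mul_one, inner_smul_left]
      simp only [RCLike.conj_to_real, hinsq, mul_one]
      nlinarith
  · intro z hz
    set p := x' + ε • ξ' with hp
    set u := (z - y) - (x' - x) with huu
    have hwu : z - p = v + u - ε • ξ' := by simp only [hp, huu, hv]; abel
    have hu2 : ‖u‖ ≤ 2*η := by
      calc ‖u‖ ≤ ‖z - y‖ + ‖x' - x‖ := norm_sub_le _ _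
      _ ≤ 2*η := by linarith
    -- inner products
    have hvξ' : (inner ℝ v ξ' : ℝ) ≥ c*d + m - d*η := by
      have h1 : (inner ℝ v ξ' : ℝ) = (inner ℝ v ξ : ℝ) + (inner ℝ v (ξ' - ξ) : ℝ) := by
        rw [← inner_add_right]; norm_num
      have h2 : |(inner ℝ v (ξ' - ξ) : ℝ)| ≤ d * η := by
        calc |(inner ℝ v (ξ' - ξ) : ℝ)| ≤ ‖v‖ * ‖ξ' - ξ‖ := abs_real_inner_le_norm _ _
        _ ≤ d * η := by rw [← hd]; exact mul_le_mul_of_nonneg_left hξξ (norm_nonneg _)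
      have h3 := (abs_le.mp h2).1
      have h4 : (inner ℝ v ξ : ℝ) = m + c*d := by rw [hm]; ring
      rw [h1, h4]; linarith
    -- step (i): ‖v - ε ξ'‖ ≤ d - ε c/2
    have hkey : ‖v - ε • ξ'‖ ≤ d - ε*c/2 := by
      have hsq : ‖v - ε • ξ'‖^2 = d^2 - 2*ε*(inner ℝ v ξ' : ℝ) + ε^2 := by
        rw [norm_sub_sq_real, inner_smul_right, norm_smul, mul_pow, Real.norm_eq_abs, sq_abs,
          hξ', ← hd]
        ring
      have hη8 : η*(8*(d+2)) ≤ m := by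
        rw [← le_div_iff₀ (by positivity)]; exact hηm
      have hrhs0 : 0 ≤ d - ε*c/2 := by nlinarith
      have hsqle : ‖v - ε • ξ'‖^2 ≤ (d - ε*c/2)^2 := by
        rw [hsq]
        nlinarith [mul_le_mul_of_nonneg_left hη8 hd0.le, mul_pos hε0 hη0,
          mul_pos hε0 hm0, mul_le_mul_of_nonneg_left hvξ' hε0.le, sq_nonneg ε,
          mul_le_mul_of_nonneg_left hη8 hε0.le, mul_nonneg hε0.le hη0.le,
          mul_le_mul_of_nonneg_left hεcd hε0.le]
      nlinarith [norm_nonneg (v - ε • ξ'), sq_nonneg (‖v - ε • ξ'‖ - (d - ε*c/2)),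
        sq_nonneg (‖v - ε • ξ'‖ + (d - ε*c/2))]
    -- norm bounds on w
    have hwub : ‖z - p‖ ≤ d - ε*c/2 + 2*η := by
      rw [hwu]
      calc ‖v + u - ε • ξ'‖ = ‖(v - ε • ξ') + u‖ := by
            rw [show v + u - ε • ξ' = (v - ε • ξ') + u from by abel]
      _ ≤ ‖v - ε • ξ'‖ + ‖u‖ := norm_add_le _ _
      _ ≤ d - ε*c/2 + 2*η := by linarith
    have hwlb : d - 2*η - ε ≤ ‖z - p‖ := by
      have h1 : ‖z - p‖ ≥ ‖v‖ - ‖u - ε • ξ'‖ := by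
        have h2 : v + u - ε • ξ' = v + (u - ε • ξ') := by abel
        rw [hwu, h2]
        have := norm_add_le (v + (u - ε • ξ')) (-(u - ε • ξ'))
        simp only [add_neg_cancel_right, norm_neg] at this
        linarith
      have h3 : ‖u - ε • ξ'‖ ≤ 2*η + ε := by
        calc ‖u - ε • ξ'‖ ≤ ‖u‖ + ‖ε • ξ'‖ := norm_sub_le _ _
        _ ≤ 2*η + ε := by
            rw [norm_smul, hξ', Real.norm_eq_abs, abs_of_pos hε0, mul_one]; linarith
      rw [← hd] at h1; linarith
    refine ⟨by nlinarith, by linarith, ?_⟩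
    -- inner bound
    have hwin : (inner ℝ (z - p) ξ' : ℝ) ≥ c*d + m - d*η - 2*η - ε := by
      rw [hwu]
      have h1 : (inner ℝ (v + u - ε • ξ') ξ' : ℝ)
          = (inner ℝ v ξ' : ℝ) + (inner ℝ u ξ' : ℝ) - ε := by
        rw [sub_eq_add_neg, inner_add_left, inner_add_left, inner_neg_left, inner_smul_left]
        simp only [RCLike.conj_to_real, hinsq, mul_one]
        ring
      have h2 : |(inner ℝ u ξ' : ℝ)| ≤ 2*η := by
        calc |(inner ℝ u ξ' : ℝ)| ≤ ‖u‖ * ‖ξ'‖ := abs_real_inner_le_norm _ _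
        _ ≤ 2*η := by rw [hξ', mul_one]; exact hu2
      have := abs_le.mp h2
      rw [h1]; linarith [this.1, hvξ']
    have hcw : c * ‖z - p‖ ≤ c*d + 2*η := by nlinarith
    have hη8 : η*(8*(d+2)) ≤ m := by
      rw [← le_div_iff₀ (by positivity)]; exact hηm
    have hfin : d*η + 4*η + ε < m := by nlinarith
    show c * ‖z - p‖ < (inner ℝ (z - p) ξ' : ℝ)
    linarith

section General
variable {E : Type*} [NormedAddCommGroup E] [NormedSpace ℝ E] [ProperSpace E]

/-- A point on the segment between a point of `s` and a point outside `s`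
lies on the frontier of `s`. -/
lemma segment_inter_frontier {s : Set E} {a b : E} (ha : a ∈ s) (hb : b ∉ s) :
    ∃ w ∈ frontier s, w ∈ segment ℝ a b := by
  by_contra h
  push_neg at h
  have hsub : segment ℝ a b ⊆ interior s ∪ (closure s)ᶜ := by
    intro w hw
    rcases Classical.em (w ∈ closure s) with hc | hc
    · left
      rcases Classical.em (w ∈ interior s) with hi | hi
      · exact hi
      · exact absurd ⟨hc, hi⟩ (fun hf => h w hf hw)
    · right; exact hc
  have hdisj : Disjoint (interior s) ((closure s)ᶜ) :=
    Disjoint.mono_left interior_subset_closure disjoint_compl_right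
  have hseg : IsPreconnected (segment ℝ a b) := (convex_segment a b).isPreconnected
  have h1 : (segment ℝ a b ∩ interior s).Nonempty ∨ segment ℝ a b ⊆ (closure s)ᶜ := by
    rcases Classical.em ((segment ℝ a b ∩ interior s).Nonempty) with hne | hne
    · exact Or.inl hne
    · right
      intro w hw
      rcases hsub hw with h2 | h2
      · exact absurd ⟨w, hw, h2⟩ hne
      · exact h2
  rcases h1 with hne | hall
  · have := hseg.subset_left_of_subset_union isOpen_interior (isOpen_compl_iff.mpr isClosed_closure)
      hdisj hsub hne
    exact hb (interior_subset (this (right_mem_segment ℝ a b)))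
  · exact (hall (left_mem_segment ℝ a b)) (subset_closure ha)

/-- Blaschke selection: a sequence of nonempty compact subsets of a fixed closed ball
has a subsequence converging in Hausdorff distance. -/
lemma blaschke {R : ℝ} (hR : 0 < R) (A : ℕ → Set E)
    (hAc : ∀ n, IsCompact (A n)) (hAne : ∀ n, (A n).Nonempty)
    (hAsub : ∀ n, A n ⊆ closedBall (0 : E) R) :
    ∃ φ : ℕ → ℕ, StrictMono φ ∧ ∃ K : Set E, IsCompact K ∧ K.Nonempty ∧
      K ⊆ closedBall (0 : E) R ∧
      Tendsto (fun k => hausdorffDist (A (φ k)) K) atTop (nhds 0) := by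
  set S : Set E := closedBall (0 : E) R
  have hScompact : IsCompact S := isCompact_closedBall _ _
  haveI : CompactSpace S := isCompact_iff_compactSpace.mp hScompact
  have hiso : Isometry ((↑) : S → E) := isometry_subtype_coe
  -- lift the sets
  have hlift : ∀ n, IsCompact (((↑) : S → E) ⁻¹' (A n)) := by
    intro n
    apply IsCompact.of_isClosed_subset isCompact_univ
      (IsClosed.preimage continuous_subtype_val (hAc n).isClosed) (subset_univ _)
  have hliftne : ∀ n, (((↑) : S → E) ⁻¹' (A n)).Nonempty := by
    intro n
    obtain ⟨a, ha⟩ := hAne n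
    exact ⟨⟨a, hAsub n ha⟩, ha⟩
  set B : ℕ → NonemptyCompacts S := fun n => ⟨⟨_, hlift n⟩, hliftne n⟩ with hB
  obtain ⟨L, -, φ, hφ, hconv⟩ := isCompact_univ.tendsto_subseq (x := B) (fun n => mem_univ _)
  refine ⟨φ, hφ, Subtype.val '' (L : Set S), ?_, ?_, ?_, ?_⟩
  · exact (L.isCompact.image continuous_subtype_val)
  · exact L.nonempty.image _
  · rintro x ⟨y, -, rfl⟩; exact y.2
  · have himg : ∀ n, Subtype.val '' ((B n : Set S)) = A n := by
      intro n
      have : Subtype.val '' (Subtype.val ⁻¹' A n : Set S) = S ∩ A n :=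
        Subtype.image_preimage_coe S (A n)
      rw [show ((B n : Set S)) = (Subtype.val ⁻¹' A n : Set S) from rfl, this]
      exact Set.inter_eq_self_of_subset_right (hAsub n)
    have : ∀ k, hausdorffDist (A (φ k)) (Subtype.val '' (L : Set S))
        = dist (B (φ k)) L := by
      intro k
      rw [← himg (φ k), hausdorffDist_image hiso, NonemptyCompacts.dist_eq]
    simp only [this]
    exact (tendsto_iff_dist_tendsto_zero.mp hconv)

end General

lemma vol_KF_null {γ α R : ℝ} (hγ : γ ∈ Set.Ioo 0 (Real.pi/2)) (hα : 0 < α) (hR : 0 < R)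
    (P : ℕ → Set E3) (hPc : ∀ k, IsCompact (P k)) (hPne : ∀ k, (P k).Nonempty)
    (hPcone : ∀ k, UniformConeCond α γ (P k)ᶜ)
    (K F : Set E3) (hKc : IsCompact K) (hKne : K.Nonempty) (hFc : IsCompact F)
    (hFne : F.Nonempty) (hCne : ∀ k, (closure (P k)ᶜ ∩ closedBall 0 R).Nonempty)
    (hdK : Tendsto (fun k => hausdorffDist (P k) K) atTop (nhds 0))
    (hdF : Tendsto (fun k => hausdorffDist (closure (P k)ᶜ ∩ closedBall 0 R) F) atTop (nhds 0)) :
    volume (K ∩ F) = 0 := by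
  obtain ⟨hc0, hc1⟩ := cos_bounds hγ
  set c := Real.cos γ with hc
  set κ := (1 - c)/4 with hκ
  have hκ0 : 0 < κ := by rw [hκ]; linarith
  have hκ4 : κ ≤ 1/4 := by rw [hκ]; linarith
  set S := K ∩ F with hS
  by_contra hvol
  have hSmeas : MeasurableSet S := ((hKc.inter_right hFc.isClosed).isClosed).measurableSet
  -- a density point of S inside S
  have hae := Besicovitch.ae_tendsto_measure_inter_div volume S
  have hmem := ae_restrict_mem (μ := volume) hSmeas
  haveI : (MeasureTheory.ae (volume.restrict S)).NeBot :=
    ae_neBot.mpr (fun h => hvol (Measure.restrict_eq_zero.mp h))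
  obtain ⟨x, hxtend, hxS⟩ := (hae.and hmem).exists
  -- the quantitative estimate
  set θ := ENNReal.ofReal ((κ/4)^3) with hθ
  have hθ0 : θ ≠ 0 := by
    rw [hθ]; simp only [ne_eq, ENNReal.ofReal_eq_zero, not_le]; positivity
  have hθtop : θ ≠ ⊤ := ENNReal.ofReal_ne_top
  have hEst : ∀ ρ ∈ Set.Ioo (0:ℝ) α,
      volume (S ∩ closedBall x ρ) / volume (closedBall x ρ) + θ ≤ 1 := by
    intro ρ hρ
    set t := ρ/2 with ht
    have ht0 : 0 < t := by rw [ht]; linarith [hρ.1]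
    have htα : t ≤ α/2 := by rw [ht]; linarith [hρ.2]
    set δ := t*κ/8 with hδ
    have hδ0 : 0 < δ := by positivity
    -- choose a good index k
    have hEdK : ∀ k, EMetric.hausdorffEdist K (P k) ≠ ⊤ := fun k =>
      Metric.hausdorffEdist_ne_top_of_nonempty_of_bounded hKne (hPne k) hKc.isBounded (hPc k).isBounded
    have hEdF : ∀ k, EMetric.hausdorffEdist F (closure (P k)ᶜ ∩ closedBall 0 R) ≠ ⊤ := fun k =>
      Metric.hausdorffEdist_ne_top_of_nonempty_of_bounded hFne (hCne k) hFc.isBounded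
        (Metric.isBounded_closedBall.subset Set.inter_subset_right)
    have hev1 : ∀ᶠ k in atTop, hausdorffDist (P k) K < δ :=
      (tendsto_order.mp hdK).2 δ hδ0
    have hev2 : ∀ᶠ k in atTop, hausdorffDist (closure (P k)ᶜ ∩ closedBall 0 R) F < δ/2 :=
      (tendsto_order.mp hdF).2 _ (by positivity)
    obtain ⟨k, hk1, hk2⟩ := (hev1.and hev2).exists
    -- x is close to P k
    have hxK : x ∈ K := hxS.1
    have hxF : x ∈ F := hxS.2
    have hKP : ∀ q ∈ K, infDist q (P k) ≤ δ := by
      intro q hq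
      calc infDist q (P k) ≤ hausdorffDist K (P k) :=
            Metric.infDist_le_hausdorffDist_of_mem hq (hEdK k)
      _ = hausdorffDist (P k) K := hausdorffDist_comm
      _ ≤ δ := hk1.le
    -- get z ∉ P k near x
    have hzex : ∃ z, z ∉ P k ∧ dist z x ≤ δ := by
      have h1 : infDist x (closure (P k)ᶜ ∩ closedBall 0 R) ≤ δ/2 := by
        calc infDist x (closure (P k)ᶜ ∩ closedBall 0 R)
            ≤ hausdorffDist F (closure (P k)ᶜ ∩ closedBall 0 R) :=
              Metric.infDist_le_hausdorffDist_of_mem hxF (hEdF k)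
        _ = hausdorffDist (closure (P k)ᶜ ∩ closedBall 0 R) F := hausdorffDist_comm
        _ ≤ δ/2 := hk2.le
      have h2 : infDist x (closure (P k)ᶜ ∩ closedBall 0 R) < δ*3/4 := lt_of_le_of_lt h1 (by linarith)
      obtain ⟨cp, hcp, hcpd⟩ := (Metric.infDist_lt_iff (hCne k)).mp h2
      obtain ⟨z, hz, hzd⟩ := Metric.mem_closure_iff.mp hcp.1 (δ/4) (by positivity)
      exact ⟨z, hz, by
        have := dist_triangle z cp x
        rw [dist_comm z cp] at this
        rw [dist_comm x cp] at hcpd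
        linarith⟩
    obtain ⟨z, hzP, hzx⟩ := hzex
    -- get a ∈ P k near x
    obtain ⟨a, haP, haxd⟩ := (Metric.infDist_lt_iff (hPne k)).mp (lt_of_le_of_lt (hKP x hxK) (by linarith : δ < 2*δ))
    -- frontier point w between a and z
    obtain ⟨w, hwf, hwseg⟩ := segment_inter_frontier haP hzP
    have hwx : dist w x ≤ 2*δ := by
      have hsub : segment ℝ a z ⊆ closedBall x (2*δ) := by
        apply (convex_closedBall x (2*δ)).segment_subset
        · rw [mem_closedBall, dist_comm]; linarith
        · rw [mem_closedBall]; linarith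
      exact mem_closedBall.mp (hsub hwseg)
    -- cone condition at w applied to z
    have hwf' : w ∈ frontier (P k)ᶜ := by rw [frontier_compl]; exact hwf
    obtain ⟨ξ, hξ1, hcc⟩ := hPcone k w hwf'
    have hzw : ‖z - w‖ < α := by
      have h1 : dist z w ≤ dist z x + dist x w := dist_triangle z x w
      rw [dist_comm x w] at h1
      have : dist z w ≤ 3*δ := by linarith
      rw [← dist_eq_norm]
      have hδα : 3*δ < α := by
        rw [hδ]
        nlinarith
      linarith
    have hcone := hcc z hzP hzw
    -- ball inside the cone, inside complement of P k
    have hball : closedBall (z + t • ξ) (κ*t) ⊆ (P k)ᶜ := by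
      have h1 := closedBall_subset_cone3 hγ hα hξ1 z ht0 htα
      have h2 : t * (1 - c)/4 = κ*t := by rw [hκ]; ring
      rw [h2] at h1
      exact h1.trans hcone
    -- the half ball avoids K
    set B' := closedBall (z + t • ξ) (κ*t/2) with hB'
    have hB'K : ∀ y ∈ B', y ∉ K := by
      intro y hy hyK
      -- infDist y (P k) ≥ κt/2
      obtain ⟨p, hp, hpd⟩ := (Metric.infDist_lt_iff (hPne k)).mp
        (lt_of_le_of_lt (hKP y hyK) (by nlinarith : δ < κ*t/2))
      have : p ∈ closedBall (z + t • ξ) (κ*t) := by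
        rw [mem_closedBall]
        have h1 : dist p (z + t • ξ) ≤ dist p y + dist y (z + t • ξ) := dist_triangle _ _ _
        have h2 : dist y (z + t • ξ) ≤ κ*t/2 := mem_closedBall.mp hy
        rw [dist_comm p y] at h1
        linarith
      exact (hball this) hp
    -- B' ⊆ closedBall x ρ
    have hB'sub : B' ⊆ closedBall x ρ := by
      intro y hy
      rw [mem_closedBall]
      have h1 : dist y x ≤ dist y (z + t • ξ) + dist (z + t • ξ) z + dist z x :=
        dist_triangle4 y (z + t • ξ) z x
      have h2 : dist (z + t • ξ) z = t := by
        rw [dist_eq_norm]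
        have : z + t • ξ - z = t • ξ := by abel
        rw [this, norm_smul, hξ1, Real.norm_eq_abs, abs_of_pos ht0, mul_one]
      have h3 : dist y (z + t • ξ) ≤ κ*t/2 := mem_closedBall.mp hy
      have : ρ = 2*t := by rw [ht]; ring
      rw [this]
      nlinarith
    -- measure estimate
    have hdisj : Disjoint (S ∩ closedBall x ρ) B' := by
      rw [Set.disjoint_left]
      intro y hy hyB'
      exact hB'K y hyB' (hy.1.1)
    have hunion : (S ∩ closedBall x ρ) ∪ B' ⊆ closedBall x ρ :=
      Set.union_subset Set.inter_subset_right hB'sub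
    have hmeasB' : MeasurableSet B' := measurableSet_closedBall
    have hadd : volume (S ∩ closedBall x ρ) + volume B' ≤ volume (closedBall x ρ) := by
      rw [← measure_union hdisj hmeasB']
      exact measure_mono hunion
    have hvolB' : volume B' = θ * volume (closedBall x ρ) := by
      rw [hB', Measure.addHaar_closedBall _ _ (by positivity : (0:ℝ) ≤ κ*t/2),
        Measure.addHaar_closedBall _ _ (by linarith [hρ.1] : (0:ℝ) ≤ ρ),
        finrank_euclideanSpace_fin, hθ, ← mul_assoc, ← ENNReal.ofReal_mul (by positivity)]
      have hexp : (κ*t/2)^3 = (κ/4)^3*ρ^3 := by rw [show ρ = 2*t from by rw [ht]; ring]; ring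
      rw [hexp]
    have hV0 : volume (closedBall x ρ) ≠ 0 := (measure_closedBall_pos _ _ hρ.1).ne'
    have hVtop : volume (closedBall x ρ) ≠ ⊤ := measure_closedBall_lt_top.ne
    calc volume (S ∩ closedBall x ρ) / volume (closedBall x ρ) + θ
        = (volume (S ∩ closedBall x ρ) + θ * volume (closedBall x ρ)) / volume (closedBall x ρ) := by
          rw [ENNReal.add_div]
          congr 1
          rw [mul_div_assoc, ENNReal.div_self hV0 hVtop, mul_one]
    _ ≤ volume (closedBall x ρ) / volume (closedBall x ρ) := by
          apply ENNReal.div_le_div_right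
          rw [← hvolB']; exact hadd
    _ = 1 := ENNReal.div_self hV0 hVtop
  -- contradiction with density 1
  have hlt : (1:ℝ≥0∞) - θ < 1 := ENNReal.sub_lt_self ENNReal.one_ne_top one_ne_zero hθ0
  have hev3 : ∀ᶠ ρ in nhdsWithin (0:ℝ) (Set.Ioi 0),
      1 - θ < volume (S ∩ closedBall x ρ) / volume (closedBall x ρ) :=
    hxtend.eventually (eventually_gt_nhds hlt)
  have hev4 : ∀ᶠ ρ in nhdsWithin (0:ℝ) (Set.Ioi 0), ρ ∈ Set.Ioo (0:ℝ) α :=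
    Ioo_mem_nhdsGT_of_mem ⟨le_refl 0, hα⟩
  obtain ⟨ρ, h3, h4⟩ := (hev3.and hev4).exists
  have h5 := hEst ρ h4
  have h6 : volume (S ∩ closedBall x ρ) / volume (closedBall x ρ) ≤ 1 - θ :=
    ENNReal.le_sub_of_add_le_right hθtop h5
  exact absurd (lt_of_lt_of_le h3 h6) (lt_irrefl _)

end

end Stmt14Aux

open Stmt14Aux

/-- Cone condition stability: given compact obstacles `O_ε ⊆ B_r(0)` whose
complements satisfy the uniform `α`-cone condition, there is a subsequence
`ε_n → 0` and a compact `O ⊆ B̄_r(0)` whose complement satisfies the uniform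
`α`-cone condition such that the measure of the symmetric difference of the
complements (equivalently, of the sets) tends to `0`. -/
theorem stmt14 (r α γ : ℝ) (hr : 0 < r) (hα : 0 < α)
    (hγ : γ ∈ Set.Ioo 0 (Real.pi/2))
    (O : ℝ → Set (EuclideanSpace ℝ (Fin 3)))
    (hcomp : ∀ ε ∈ Set.Ioo (0:ℝ) 1, IsCompact (O ε))
    (hsub : ∀ ε ∈ Set.Ioo (0:ℝ) 1, O ε ⊆ Metric.ball 0 r)
    (hcone : ∀ ε ∈ Set.Ioo (0:ℝ) 1, UniformConeCond α γ (O ε)ᶜ) :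
    ∃ (εn : ℕ → ℝ) (Olim : Set (EuclideanSpace ℝ (Fin 3))),
      (∀ n, εn n ∈ Set.Ioo (0:ℝ) 1) ∧
      Filter.Tendsto εn Filter.atTop (nhds 0) ∧
      IsCompact Olim ∧ Olim ⊆ Metric.closedBall 0 r ∧
      UniformConeCond α γ Olimᶜ ∧
      Filter.Tendsto (fun n => volume (symmDiff (O (εn n)) Olim))
        Filter.atTop (nhds 0) := by
  classical
  set e : ℕ → ℝ := fun n => ((n : ℝ) + 2)⁻¹ with he
  have hemem : ∀ n, e n ∈ Set.Ioo (0:ℝ) 1 := by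
    intro n
    constructor
    · rw [he]; positivity
    · rw [he]
      rw [inv_lt_one_iff₀]
      right
      have : (0:ℝ) ≤ (n:ℝ) := Nat.cast_nonneg n
      linarith
  have hetend : Tendsto e atTop (nhds 0) := by
    apply Tendsto.inv_tendsto_atTop
    apply Filter.tendsto_atTop_add_const_right
    exact tendsto_natCast_atTop_atTop
  by_cases hemp : ∃ᶠ n in atTop, O (e n) = ∅
  · -- empty case
    obtain ⟨φ, hφ, hφP⟩ := Filter.extraction_of_frequently_atTop hemp
    refine ⟨e ∘ φ, ∅, fun n => hemem _, hetend.comp hφ.tendsto_atTop, isCompact_empty,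
      empty_subset _, ?_, ?_⟩
    · intro x₀ hx₀
      rw [compl_empty, frontier_univ] at hx₀
      exact absurd hx₀ (Set.notMem_empty _)
    · have : ∀ n, volume (symmDiff (O ((e ∘ φ) n)) (∅ : Set E3)) = 0 := by
        intro n
        simp [Function.comp, hφP n, symmDiff_self]
      simp only [this]
      exact tendsto_const_nhds
  · -- main case
    rw [Filter.not_frequently] at hemp
    obtain ⟨N₀, hN₀⟩ := Filter.eventually_atTop.mp hemp
    set R := r + 1 with hR
    have hRpos : (0:ℝ) < R := by rw [hR]; linarith
    set A : ℕ → Set E3 := fun n => O (e (n + N₀)) with hA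
    have hAmem : ∀ n, e (n + N₀) ∈ Set.Ioo (0:ℝ) 1 := fun n => hemem _
    have hAc : ∀ n, IsCompact (A n) := fun n => hcomp _ (hAmem n)
    have hAne : ∀ n, (A n).Nonempty := by
      intro n
      rw [Set.nonempty_iff_ne_empty]
      exact hN₀ (n + N₀) (Nat.le_add_left _ _)
    have hAsub : ∀ n, A n ⊆ ball (0:E3) r := fun n => hsub _ (hAmem n)
    have hAsub' : ∀ n, A n ⊆ closedBall (0:E3) r := fun n => (hAsub n).trans ball_subset_closedBall
    obtain ⟨φ₁, hφ₁, K, hKc, hKne, hKsub, hdK⟩ := blaschke hr A hAc hAne hAsub'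
    -- complements
    set C : ℕ → Set E3 := fun k => closure (A (φ₁ k))ᶜ ∩ closedBall 0 R with hC
    have hCc : ∀ k, IsCompact (C k) :=
      fun k => (isCompact_closedBall _ _).of_isClosed_subset
        (isClosed_closure.inter isClosed_closedBall) Set.inter_subset_right
    -- a point outside the ball of radius r but inside radius R
    have hpt : ∃ p : E3, ‖p‖ = r + 1/2 := by
      refine ⟨(r + 1/2) • EuclideanSpace.single (0 : Fin 3) (1:ℝ), ?_⟩
      rw [norm_smul, EuclideanSpace.norm_single, norm_one, mul_one, Real.norm_eq_abs,
        abs_of_pos (by linarith)]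
    obtain ⟨p₀, hp₀⟩ := hpt
    have hCne : ∀ k, (C k).Nonempty := by
      intro k
      refine ⟨p₀, subset_closure ?_, ?_⟩
      · intro hmem
        have := hAsub (φ₁ k) hmem
        rw [mem_ball, dist_zero_right, hp₀] at this
        linarith
      · rw [mem_closedBall, dist_zero_right, hp₀, hR]; linarith
    have hCsub : ∀ k, C k ⊆ closedBall (0:E3) R := fun k => Set.inter_subset_right
    obtain ⟨φ₂, hφ₂, F, hFc, hFne, hFsub, hdF⟩ := blaschke hRpos C hCc hCne hCsub
    -- the final subsequence
    set φ : ℕ → ℕ := φ₁ ∘ φ₂ with hφdef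
    set εn : ℕ → ℝ := fun k => e (φ k + N₀) with hεn
    set P : ℕ → Set E3 := fun k => O (εn k) with hP
    have hPA : ∀ k, P k = A (φ k) := fun k => rfl
    have hPc : ∀ k, IsCompact (P k) := fun k => hAc (φ k)
    have hPne : ∀ k, (P k).Nonempty := fun k => hAne (φ k)
    have hPsub : ∀ k, P k ⊆ ball (0:E3) r := fun k => hAsub (φ k)
    have hPcone : ∀ k, UniformConeCond α γ (P k)ᶜ := fun k => hcone _ (hAmem (φ k))
    have hPCne : ∀ k, (closure (P k)ᶜ ∩ closedBall (0:E3) R).Nonempty := fun k => hCne (φ₂ k)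
    have hdK' : Tendsto (fun k => hausdorffDist (P k) K) atTop (nhds 0) :=
      hdK.comp hφ₂.tendsto_atTop
    have hdF' : Tendsto (fun k => hausdorffDist (closure (P k)ᶜ ∩ closedBall 0 R) F) atTop
        (nhds 0) := hdF
    -- hausdorff edist finiteness
    have hEdK : ∀ k, EMetric.hausdorffEdist K (P k) ≠ ⊤ := fun k =>
      Metric.hausdorffEdist_ne_top_of_nonempty_of_bounded hKne (hPne k) hKc.isBounded
        (hPc k).isBounded
    have hEdF : ∀ k, EMetric.hausdorffEdist F (closure (P k)ᶜ ∩ closedBall 0 R) ≠ ⊤ := fun k =>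
      Metric.hausdorffEdist_ne_top_of_nonempty_of_bounded hFne (hPCne k) hFc.isBounded
        (isBounded_closedBall.subset Set.inter_subset_right)
    -- basic limit facts
    have HFin : ∀ y ∈ closedBall (0:E3) R, (∃ᶠ k in atTop, y ∈ closure (P k)ᶜ) → y ∈ F := by
      intro y hyR hfreq
      rw [(hFc.isClosed.mem_iff_infDist_zero hFne)]
      have hnn : 0 ≤ infDist y F := infDist_nonneg
      by_contra hne
      have hpos : 0 < infDist y F := lt_of_le_of_ne hnn (Ne.symm hne)
      have hev : ∀ᶠ k in atTop,
          hausdorffDist (closure (P k)ᶜ ∩ closedBall 0 R) F < infDist y F :=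
        (tendsto_order.mp hdF').2 _ hpos
      obtain ⟨k, hk1, hk2⟩ := (hfreq.and_eventually hev).exists
      have hyC : y ∈ closure (P k)ᶜ ∩ closedBall 0 R := ⟨hk1, hyR⟩
      have := Metric.infDist_le_hausdorffDist_of_mem hyC
        (by rw [EMetric.hausdorffEdist_comm]; exact hEdF k)
      linarith
    have HKout : ∀ y, y ∉ K → ∀ᶠ k in atTop, y ∉ P k := by
      intro y hy
      have hpos : 0 < infDist y K := (hKc.isClosed.notMem_iff_infDist_pos hKne).mp hy
      filter_upwards [(tendsto_order.mp hdK').2 _ hpos] with k hk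
      intro hyP
      have := Metric.infDist_le_hausdorffDist_of_mem hyP
        (by rw [EMetric.hausdorffEdist_comm]; exact hEdK k)
      linarith
    have HKnear : ∀ q ∈ K, ∀ δ : ℝ, 0 < δ → ∀ᶠ k in atTop, infDist q (P k) < δ := by
      intro q hq δ hδ
      filter_upwards [(tendsto_order.mp hdK').2 _ hδ] with k hk
      calc infDist q (P k) ≤ hausdorffDist K (P k) :=
            Metric.infDist_le_hausdorffDist_of_mem hq (hEdK k)
      _ = hausdorffDist (P k) K := hausdorffDist_comm
      _ < δ := hk
    set Olim : Set E3 := closure (K \ F) with hOlim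
    have hOlimK : Olim ⊆ K := closure_minimal Set.diff_subset hKc.isClosed
    have hOlimc : IsCompact Olim := hKc.of_isClosed_subset isClosed_closure hOlimK
    have hOlimsub : Olim ⊆ closedBall (0:E3) r := hOlimK.trans hKsub
    have HCnear : ∀ q, q ∉ Olim → ∀ δ : ℝ, 0 < δ →
        ∀ᶠ k in atTop, ∃ z, z ∉ P k ∧ dist z q ≤ δ := by
      intro q hq δ hδ
      by_cases hqF : q ∈ F
      · filter_upwards [(tendsto_order.mp hdF').2 _ (by positivity : (0:ℝ) < δ/2)] with k hk
        have h1 : infDist q (closure (P k)ᶜ ∩ closedBall 0 R) < δ/2 := by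
          calc infDist q (closure (P k)ᶜ ∩ closedBall 0 R)
              ≤ hausdorffDist F (closure (P k)ᶜ ∩ closedBall 0 R) :=
                Metric.infDist_le_hausdorffDist_of_mem hqF (hEdF k)
          _ = hausdorffDist (closure (P k)ᶜ ∩ closedBall 0 R) F := hausdorffDist_comm
          _ < δ/2 := hk
        obtain ⟨cp, hcp, hcpd⟩ := (Metric.infDist_lt_iff (hPCne k)).mp h1
        obtain ⟨z, hz, hzd⟩ := Metric.mem_closure_iff.mp hcp.1 (δ/2) (by positivity)
        refine ⟨z, hz, ?_⟩
        calc dist z q ≤ dist z cp + dist cp q := dist_triangle _ _ _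
        _ ≤ δ := by
            rw [dist_comm z cp]
            rw [dist_comm cp q]
            linarith
      · have hqK : q ∉ K := by
          intro hqK
          exact hq (subset_closure ⟨hqK, hqF⟩)
        filter_upwards [HKout q hqK] with k hk
        exact ⟨q, hk, by simp [hδ.le]⟩
    -- the null intersection
    have hNull : volume (K ∩ F) = 0 :=
      vol_KF_null hγ hα hRpos P hPc hPne hPcone K F hKc hKne hFc hFne hPCne hdK' hdF'
    -- εn basic facts
    have hεmem : ∀ n, εn n ∈ Set.Ioo (0:ℝ) 1 := fun n => hemem _
    have hεtend : Tendsto εn atTop (nhds 0) := by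
      apply hetend.comp
      apply Filter.tendsto_atTop_mono (fun k => Nat.le_add_right (φ k) N₀)
      exact (hφ₁.comp hφ₂).tendsto_atTop
    -- cone condition for the limit
    have hconeOlim : UniformConeCond α γ Olimᶜ := by
      intro x₀ hx₀
      rw [frontier_compl] at hx₀
      have hx₀Olim : x₀ ∈ Olim := isClosed_closure.frontier_subset hx₀
      have hx₀K : x₀ ∈ K := hOlimK hx₀Olim
      have hx₀c : x₀ ∈ closure Olimᶜ := by
        rw [frontier_eq_closure_inter_closure] at hx₀
        exact hx₀.2
      -- frontier points of P k
      have hfr_ne : ∀ k, (frontier (P k)).Nonempty := by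
        intro k
        rw [nonempty_frontier_iff]
        refine ⟨hPne k, ?_⟩
        intro huniv
        have : p₀ ∈ P k := by rw [huniv]; trivial
        have := hPsub k this
        rw [mem_ball, dist_zero_right, hp₀] at this
        linarith
      have hfr_cpt : ∀ k, IsCompact (frontier (P k)) := fun k =>
        (hPc k).of_isClosed_subset isClosed_frontier ((hPc k).isClosed.frontier_subset)
      choose w hwmem hwdist using fun k => (hfr_cpt k).exists_infDist_eq_dist (hfr_ne k) x₀
      -- the frontier points converge to x₀
      have hwev : ∀ δ : ℝ, 0 < δ → ∀ᶠ k in atTop, dist x₀ (w k) < δ := by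
        intro δ hδ
        obtain ⟨q, hqO, hqd⟩ := Metric.mem_closure_iff.mp hx₀c (δ/8) (by positivity)
        filter_upwards [HCnear q hqO (δ/8) (by positivity),
          HKnear x₀ hx₀K (δ/4) (by positivity)] with k hk1 hk2
        obtain ⟨z, hzP, hzq⟩ := hk1
        obtain ⟨a, haP, haxd⟩ := (Metric.infDist_lt_iff (hPne k)).mp hk2
        obtain ⟨v, hvf, hvseg⟩ := segment_inter_frontier haP hzP
        have hzx : dist z x₀ ≤ δ/4 := by
          calc dist z x₀ ≤ dist z q + dist q x₀ := dist_triangle _ _ _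
          _ ≤ δ/4 := by
              rw [dist_comm q x₀]
              linarith
        have hseg : segment ℝ a z ⊆ closedBall x₀ (δ/4) := by
          apply (convex_closedBall x₀ (δ/4)).segment_subset
          · rw [mem_closedBall, dist_comm]; linarith
          · rw [mem_closedBall]; exact hzx
        have hvx : dist x₀ v ≤ δ/4 := by
          rw [dist_comm]
          exact mem_closedBall.mp (hseg hvseg)
        calc dist x₀ (w k) = infDist x₀ (frontier (P k)) := (hwdist k).symm
        _ ≤ dist x₀ v := infDist_le_dist_of_mem hvf
        _ < δ := by linarith
      -- cone directions
      have hwmem' : ∀ k, w k ∈ frontier (P k)ᶜ := by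
        intro k; rw [frontier_compl]; exact hwmem k
      choose ξs hξs1 hξscc using fun k => hPcone k (w k) (hwmem' k)
      have hsph : ∀ k, ξs k ∈ sphere (0:E3) 1 := by
        intro k; rw [mem_sphere, dist_zero_right]; exact hξs1 k
      obtain ⟨ξ, hξsph, ψ, hψ, hψconv⟩ := (isCompact_sphere (0:E3) 1).tendsto_subseq hsph
      have hξ1 : ‖ξ‖ = 1 := by rwa [mem_sphere, dist_zero_right] at hξsph
      refine ⟨ξ, hξ1, ?_⟩
      intro x hx hxα y hy
      by_contra hyn
      rw [Set.notMem_compl_iff] at hyn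
      set D := α - ‖x - x₀‖ with hD
      have hD0 : 0 < D := by rw [hD]; linarith
      obtain ⟨ε, η, hε0, hη0, hεθ, hηθ, hrob⟩ := cone3_robust hγ hα hξ1 hy (D/8) (by positivity)
      -- a point of K \ F near y
      obtain ⟨s, hsKF, hsd⟩ := Metric.mem_closure_iff.mp hyn η hη0
      -- gather eventual facts along ψ
      have hev1 : ∀ᶠ j in atTop, ∃ z, z ∉ P (ψ j) ∧ dist z x ≤ η :=
        hψ.tendsto_atTop.eventually (HCnear x hx η hη0)
      have hev2 : ∀ᶠ j in atTop, ‖ξs (ψ j) - ξ‖ ≤ η := by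
        have := Metric.tendsto_atTop.mp hψconv η hη0
        obtain ⟨N, hN⟩ := this
        rw [Filter.eventually_atTop]
        exact ⟨N, fun j hj => by
          have := hN j hj
          rw [Function.comp_apply, dist_eq_norm] at this
          linarith⟩
      have hev3 : ∀ᶠ j in atTop, dist x₀ (w (ψ j)) < D/8 :=
        hψ.tendsto_atTop.eventually (hwev (D/8) (by positivity))
      have hKey : ∀ᶠ j in atTop, s ∉ P (ψ j) := by
        filter_upwards [hev1, hev2, hev3] with j h1 h2 h3
        obtain ⟨x', hx'P, hx'x⟩ := h1
        set k := ψ j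
        have hx'w : ‖x' - w k‖ < α := by
          calc ‖x' - w k‖ = dist x' (w k) := (dist_eq_norm _ _).symm
          _ ≤ dist x' x + dist x x₀ + dist x₀ (w k) := dist_triangle4 _ _ _ _
          _ < η + ‖x - x₀‖ + D/8 := by
              rw [dist_eq_norm x x₀]
              have : dist x' x ≤ η := hx'x
              linarith
          _ ≤ α := by
              rw [hD] at hηθ ⊢
              linarith
        have hccz := hξscc k x' hx'P hx'w
        have hrobj := hrob x' (ξs k) (hξs1 k) (by rw [← dist_eq_norm]; exact hx'x) h2
        have hpmem : x' + ε • ξs k ∈ (P k)ᶜ := hccz hrobj.1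
        have hpw : ‖x' + ε • ξs k - w k‖ < α := by
          have h4 : ‖x' + ε • ξs k - w k‖ ≤ ‖x' - w k‖ + ε := by
            calc ‖x' + ε • ξs k - w k‖ = ‖(x' - w k) + ε • ξs k‖ := by
                  rw [show x' + ε • ξs k - w k = (x' - w k) + ε • ξs k from by abel]
            _ ≤ ‖x' - w k‖ + ‖ε • ξs k‖ := norm_add_le _ _
            _ = ‖x' - w k‖ + ε := by
                  rw [norm_smul, hξs1 k, Real.norm_eq_abs, abs_of_pos hε0, mul_one]
          have h5 : ‖x' - w k‖ ≤ η + ‖x - x₀‖ + D/8 := by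
            calc ‖x' - w k‖ = dist x' (w k) := (dist_eq_norm _ _).symm
            _ ≤ dist x' x + dist x x₀ + dist x₀ (w k) := dist_triangle4 _ _ _ _
            _ ≤ η + ‖x - x₀‖ + D/8 := by
                rw [dist_eq_norm x x₀]
                have : dist x' x ≤ η := hx'x
                linarith
          rw [hD] at hηθ hεθ
          linarith
        have hccp := hξscc k (x' + ε • ξs k) hpmem hpw
        have hsmem : s ∈ cone3 (x' + ε • ξs k) γ α (ξs k) := by
          apply (hrobj.2) s
          rw [← dist_eq_norm]
          rw [dist_comm] at hsd
          exact hsd.le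
        exact hccp hsmem
      -- so s is frequently outside P k, hence in F; contradiction
      have hfreq : ∃ᶠ k in atTop, s ∈ closure (P k)ᶜ := by
        rw [Filter.frequently_atTop]
        intro N
        obtain ⟨j₀, hj₀⟩ := Filter.eventually_atTop.mp hKey
        refine ⟨ψ (max j₀ N), ?_, ?_⟩
        · calc N ≤ max j₀ N := le_max_right _ _
          _ ≤ ψ (max j₀ N) := hψ.le_apply
        · exact subset_closure (hj₀ _ (le_max_left _ _))
      have hsF : s ∈ F := HFin s (by
        have : s ∈ K := hsKF.1
        have := hKsub this
        rw [mem_closedBall] at this ⊢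
        rw [hR]
        linarith) hfreq
      exact hsKF.2 hsF
    -- measure convergence
    have hsymm : Tendsto (fun k => volume (symmDiff (P k) Olim)) atTop (nhds 0) := by
      have h0 : (nhds (0 : ENNReal)) = nhds (volume (∅ : Set E3)) := by simp
      rw [h0]
      apply tendsto_measure_of_ae_tendsto_indicator atTop MeasurableSet.empty
        (fun k => ((hPc k).isClosed.measurableSet.symmDiff hOlimc.isClosed.measurableSet))
        (measurableSet_closedBall (x := (0:E3)) (ε := R))
        (measure_closedBall_lt_top.ne)
      · apply Filter.Eventually.of_forall
        intro k
        intro z hz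
        rw [Set.mem_symmDiff] at hz
        rcases hz with ⟨hz1, -⟩ | ⟨hz1, -⟩
        · have := (hPsub k).trans ball_subset_closedBall hz1
          rw [mem_closedBall] at this ⊢
          rw [hR]; linarith
        · have := hOlimsub hz1
          rw [mem_closedBall] at this ⊢
          rw [hR]; linarith
      · have hae : ∀ᵐ z ∂(volume : Measure E3), z ∉ K ∩ F := by
          rw [← measure_eq_zero_iff_ae_notMem]
          exact hNull
        filter_upwards [hae] with z hz
        by_cases hzK : z ∈ K
        · have hzF : z ∉ F := fun h => hz ⟨hzK, h⟩
          have hzO : z ∈ Olim := subset_closure ⟨hzK, hzF⟩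
          have hev : ∀ᶠ k in atTop, z ∈ P k := by
            by_contra hcon
            rw [Filter.not_eventually] at hcon
            have hfreq : ∃ᶠ k in atTop, z ∈ closure (P k)ᶜ :=
              hcon.mono (fun k hk => subset_closure hk)
            exact hzF (HFin z (by
              have := hKsub hzK
              rw [mem_closedBall] at this ⊢
              rw [hR]; linarith) hfreq)
          filter_upwards [hev] with k hk
          simp only [Set.mem_symmDiff, Set.mem_empty_iff_false, iff_false]
          rintro (⟨-, h2⟩ | ⟨-, h2⟩)
          · exact h2 hzO
          · exact h2 hk
        · have hzO : z ∉ Olim := fun h => hzK (hOlimK h)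
          filter_upwards [HKout z hzK] with k hk
          simp only [Set.mem_symmDiff, Set.mem_empty_iff_false, iff_false]
          rintro (⟨h1, -⟩ | ⟨h1, -⟩)
          · exact hk h1
          · exact hzO h1
    exact ⟨εn, Olim, hεmem, hεtend, hOlimc, hOlimsub, hconeOlim, hsymm⟩
end
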